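/- Fix $n, N \ge 1$, $0 < \lambda \le \Lambda$, and two points $x \ne y$ in $\mathbb{R}^n$. Let $\pi = (-1, \pi')$, $A_{ij}^{\alpha\beta}$, $F_\alpha^i$, $\zeta_\alpha^i$ be functions on the two-point set $\{x, y\}$ with $\lambda|\xi|^2 \le \sum A_{ij}^{\alpha\beta}(z)\xi_\alpha^i\xi_\beta^j$ and $|A_{ij}^{\alpha\beta}(z)| \le \Lambda$ for $z \in \{x,y\}$, $\xi \in \mathbb{R}^{Nn}$. Define $U$ on $\{x,y\}$ by $U_1^i = \sum_\alpha \pi_\alpha[(\sum_{j,\beta} A_{ij}^{\alpha\beta}\zeta_\beta^j) - F_\alpha^i]$ and $U_\beta^i = \zeta_\beta^i + \pi_\beta\zeta_1^i$ for $\beta \ge 2$. Then $|\zeta(x) - \zeta(y)| \le c[|U(y)-U(x)| + |F(y)-F(x)|] + c[|U(x)|+|F(x)|][|\pi(x)-\pi(y)| + |\pi(x)-\pi(y)|^2] + c[|U(x)|+|F(x)|]\sum_{i,j,\alpha,\beta}|A_{ij}^{\alpha\beta}(y) - A_{ij}^{\alpha\beta}(x)|$, where $c$ depends only on $n, N, \lambda,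 \Lambda$. -/

import Mathlib

open Finset Real

namespace S3
variable {ι κ : Type*} [Fintype ι] [Fintype κ]

noncomputable def nu (f : ι → ℝ) : ℝ := Real.sqrt (∑ i, f i ^ 2)


lemma nu_nonneg (f : ι → ℝ) : 0 ≤ nu f := Real.sqrt_nonneg _

lemma sq_nu (f : ι → ℝ) : nu f ^ 2 = ∑ i, f i ^ 2 := Real.sq_sqrt (by positivity)

lemma nu_le_of_sq_le {f : ι → ℝ} {B : ℝ} (hB : 0 ≤ B) (h : ∑ i, f i ^ 2 ≤ B ^ 2) :
    nu f ≤ B := by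
  have := Real.sqrt_le_sqrt h
  rwa [Real.sqrt_sq hB] at this

lemma abs_le_nu (f : ι → ℝ) (i : ι) : |f i| ≤ nu f := by
  have : f i ^ 2 ≤ ∑ j, f j ^ 2 :=
    Finset.single_le_sum (f := fun j => f j ^ 2) (fun j _ => by positivity) (mem_univ i)
  have := Real.sqrt_le_sqrt this
  rwa [Real.sqrt_sq_eq_abs] at this

lemma cs (f g : ι → ℝ) : ∑ i, f i * g i ≤ nu f * nu g := by
  have h := Finset.sum_mul_sq_le_sq_mul_sq Finset.univ f g
  have h2 : (∑ i, f i * g i) ≤ |∑ i, f i * g i| := le_abs_self _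
  have h3 : |∑ i, f i * g i| = Real.sqrt ((∑ i, f i * g i) ^ 2) := (Real.sqrt_sq_eq_abs _).symm
  rw [h3] at h2
  refine h2.trans ?_
  refine (Real.sqrt_le_sqrt h).trans ?_
  rw [Real.sqrt_mul (by positivity)]
  rfl

lemma nu_add_le (f g : ι → ℝ) : nu (fun i => f i + g i) ≤ nu f + nu g := by
  refine nu_le_of_sq_le (add_nonneg (nu_nonneg f) (nu_nonneg g)) ?_
  have h := cs f g
  have h1 := sq_nu f
  have h2 := sq_nu g
  have : ∑ i, (f i + g i) ^ 2 = (∑ i, f i ^ 2) + 2 * (∑ i, f i * g i) + ∑ i, g i ^ 2 := by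
    simp only [add_sq, Finset.sum_add_distrib, Finset.mul_sum]
    ring_nf
  rw [this]; nlinarith [nu_nonneg f, nu_nonneg g]

lemma nu_le_sum_abs (f : ι → ℝ) : nu f ≤ ∑ i, |f i| := by
  refine nu_le_of_sq_le (by positivity) ?_
  have : ∀ i ∈ Finset.univ (α := ι), f i ^ 2 ≤ |f i| * ∑ j, |f j| := by
    intro i _
    have h1 : |f i| ≤ ∑ j, |f j| :=
      Finset.single_le_sum (f := fun j => |f j|) (fun j _ => abs_nonneg _) (mem_univ i)
    calc f i ^ 2 = |f i| * |f i| := by rw [← abs_mul, abs_mul_self]; ring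
    _ ≤ |f i| * ∑ j, |f j| := by apply mul_le_mul_of_nonneg_left h1 (abs_nonneg _)
  calc ∑ i, f i ^ 2 ≤ ∑ i, |f i| * ∑ j, |f j| := Finset.sum_le_sum this
  _ = (∑ i, |f i|) ^ 2 := by rw [← Finset.sum_mul]; ring

lemma nu_eq_of_abs_eq {f g : ι → ℝ} (h : ∀ i, |f i| = |g i|) : nu f = nu g := by
  unfold nu; congr 1; apply Finset.sum_congr rfl; intro i _
  rw [← sq_abs (f i), ← sq_abs (g i), h i]


noncomputable def nu2 (f : ι → κ → ℝ) : ℝ := Real.sqrt (∑ a, ∑ i, f a i ^ 2)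

lemma nu2_eq (f : ι → κ → ℝ) : nu2 f = nu (fun p : ι × κ => f p.1 p.2) := by
  unfold nu2 nu
  rw [Fintype.sum_prod_type]

lemma nu2_nonneg (f : ι → κ → ℝ) : 0 ≤ nu2 f := Real.sqrt_nonneg _

lemma sq_nu2 (f : ι → κ → ℝ) : nu2 f ^ 2 = ∑ a, ∑ i, f a i ^ 2 := Real.sq_sqrt (by positivity)

lemma nu_mono {f g : ι → ℝ} (h : ∀ i, |f i| ≤ |g i|) : nu f ≤ nu g := by
  apply Real.sqrt_le_sqrt
  apply Finset.sum_le_sum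
  intro i _
  rw [← sq_abs (f i), ← sq_abs (g i)]
  exact pow_le_pow_left₀ (abs_nonneg _) (h i) 2

lemma nu2_mono {f g : ι → κ → ℝ} (h : ∀ a i, |f a i| ≤ |g a i|) : nu2 f ≤ nu2 g := by
  rw [nu2_eq, nu2_eq]; exact nu_mono (fun p => h p.1 p.2)

lemma nu2_add_le (f g : ι → κ → ℝ) : nu2 (fun a i => f a i + g a i) ≤ nu2 f + nu2 g := by
  rw [nu2_eq, nu2_eq, nu2_eq]
  exact nu_add_le (fun p : ι × κ => f p.1 p.2) (fun p => g p.1 p.2)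

lemma abs_le_nu2 (f : ι → κ → ℝ) (a : ι) (i : κ) : |f a i| ≤ nu2 f := by
  rw [nu2_eq]; exact abs_le_nu (fun p : ι × κ => f p.1 p.2) (a, i)

lemma nu2_le_sum_abs (f : ι → κ → ℝ) : nu2 f ≤ ∑ a, ∑ i, |f a i| := by
  rw [nu2_eq]
  refine (nu_le_sum_abs (fun p : ι × κ => f p.1 p.2)).trans ?_
  rw [Fintype.sum_prod_type]

lemma nu_row_le (f : ι → κ → ℝ) (a : ι) : nu (fun i => f a i) ≤ nu2 f := by
  apply Real.sqrt_le_sqrt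
  exact Finset.single_le_sum (f := fun b => ∑ i, f b i ^2) (fun b _ => by positivity) (mem_univ a)

lemma nu2_tensor (p : ι → ℝ) (v : κ → ℝ) : nu2 (fun a i => p a * v i) = nu p * nu v := by
  unfold nu2 nu
  rw [← Real.sqrt_mul (by positivity)]
  congr 1
  rw [Finset.sum_mul_sum]
  apply Finset.sum_congr rfl; intro a _; apply Finset.sum_congr rfl; intro i _; ring

lemma ell_pair {M : κ → κ → ℝ} {v : κ → ℝ} {lamP : ℝ}
    (h : lamP * (∑ i, v i ^ 2) ≤ ∑ i, ∑ j, M i j * v i * v j) :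
    lamP * nu v ≤ nu (fun i => ∑ j, M i j * v j) := by
  rcases eq_or_lt_of_le (nu_nonneg v) with h0 | h0
  · rw [← h0, mul_zero]; exact nu_nonneg _
  have h1 : ∑ i, ∑ j, M i j * v i * v j = ∑ i, (∑ j, M i j * v j) * v i := by
    apply Finset.sum_congr rfl; intro i _
    rw [Finset.sum_mul]
    apply Finset.sum_congr rfl; intro j _; ring
  have h2 : ∑ i, (∑ j, M i j * v j) * v i ≤ nu (fun i => ∑ j, M i j * v j) * nu v :=
    cs _ _
  have h3 : lamP * nu v * nu v ≤ nu (fun i => ∑ j, M i j * v j) * nu v := by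
    have := (h.trans (h1 ▸ h2))
    calc lamP * nu v * nu v = lamP * (∑ i, v i ^ 2) := by rw [mul_assoc, ← sq_nu v]; ring
    _ ≤ _ := h.trans (h1 ▸ h2)
  exact le_of_mul_le_mul_right h3 h0


section Point
variable {n N : ℕ} [NeZero n]

def GG (U : Fin n → Fin N → ℝ) : Fin n → Fin N → ℝ := fun β j => if β = 0 then 0 else U β j

noncomputable def MM (pv : Fin n → ℝ) (A : Fin N → Fin N → Fin n → Fin n → ℝ) (i j : Fin N) : ℝ :=
  ∑ α, ∑ β, pv α * pv β * A i j α β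

noncomputable def RR (pv : Fin n → ℝ) (A : Fin N → Fin N → Fin n → Fin n → ℝ)
    (F U : Fin n → Fin N → ℝ) (i : Fin N) : ℝ :=
  -(U 0 i) + (∑ α, ∑ j, ∑ β, pv α * A i j α β * GG U β j) - ∑ α, pv α * F α i

lemma abs_GG_le (U : Fin n → Fin N → ℝ) (β : Fin n) (j : Fin N) : |GG U β j| ≤ |U β j| := by
  unfold GG; by_cases h : β = 0 <;> simp [h, abs_nonneg]

lemma nu2_GG_le (U : Fin n → Fin N → ℝ) : nu2 (GG U) ≤ nu2 U :=
  nu2_mono (abs_GG_le U)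

lemma eq_M (pv : Fin n → ℝ) (A : Fin N → Fin N → Fin n → Fin n → ℝ)
    (F U ζ : Fin n → Fin N → ℝ) (hp0 : pv 0 = -1)
    (hU0 : ∀ i, U 0 i = ∑ α, pv α * ((∑ j, ∑ β, A i j α β * ζ β j) - F α i))
    (hUβ : ∀ i, ∀ β : Fin n, β ≠ 0 → U β i = ζ β i + pv β * ζ 0 i) (i : Fin N) :
    ∑ j, MM pv A i j * ζ 0 j = RR pv A F U i := by
  have hζ : ∀ (β : Fin n) (j : Fin N), ζ β j = GG U β j - pv β * ζ 0 j := by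
    intro β j
    by_cases hβ : β = 0
    · subst hβ; simp [GG, hp0]
    · simp only [GG, if_neg hβ]; have := hUβ j β hβ; linarith
  have e1 : ∀ α, (∑ j, ∑ β, A i j α β * ζ β j)
      = (∑ j, ∑ β, A i j α β * GG U β j) - ∑ j, ∑ β, A i j α β * pv β * ζ 0 j := by
    intro α
    rw [← Finset.sum_sub_distrib]
    refine Finset.sum_congr rfl fun j _ => ?_
    rw [← Finset.sum_sub_distrib]
    refine Finset.sum_congr rfl fun β _ => ?_
    rw [hζ β j]; ring
  have t1 : ∑ j, MM pv A i j * ζ 0 j = ∑ α, ∑ j, ∑ β, pv α * pv β * A i j α β * ζ 0 j := by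
    unfold MM
    simp only [Finset.sum_mul]
    rw [Finset.sum_comm]
  have t2 : U 0 i = (∑ α, ∑ j, ∑ β, pv α * A i j α β * GG U β j)
      - (∑ α, ∑ j, ∑ β, pv α * pv β * A i j α β * ζ 0 j) - ∑ α, pv α * F α i := by
    rw [hU0 i]
    simp only [e1]
    rw [← Finset.sum_sub_distrib, ← Finset.sum_sub_distrib]
    refine Finset.sum_congr rfl fun α _ => ?_
    simp only [mul_sub, Finset.mul_sum, ← Finset.sum_sub_distrib]
    congr 1
    refine Finset.sum_congr rfl fun j _ => Finset.sum_congr rfl fun β _ => by ring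
  unfold RR
  rw [t1]
  linarith [t2]


lemma Tb (p : Fin n → ℝ) (B : Fin N → Fin N → Fin n → Fin n → ℝ) (V : Fin n → Fin N → ℝ) :
    nu (fun i => ∑ α, ∑ j, ∑ β, p α * B i j α β * V β j)
      ≤ (∑ i, ∑ j, ∑ α, ∑ β, |B i j α β|) * (nu p * nu2 V) := by
  refine (nu_le_sum_abs _).trans ?_
  have step : ∀ i, |∑ α, ∑ j, ∑ β, p α * B i j α β * V β j|
      ≤ ∑ α, ∑ j, ∑ β, |B i j α β| * (nu p * nu2 V) := by
    intro i
    refine (Finset.abs_sum_le_sum_abs _ _).trans ?_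
    refine Finset.sum_le_sum fun α _ => (Finset.abs_sum_le_sum_abs _ _).trans
      (Finset.sum_le_sum fun j _ => (Finset.abs_sum_le_sum_abs _ _).trans
      (Finset.sum_le_sum fun β _ => ?_))
    rw [abs_mul, abs_mul]
    calc |p α| * |B i j α β| * |V β j| = |B i j α β| * (|p α| * |V β j|) := by ring
    _ ≤ |B i j α β| * (nu p * nu2 V) := by
        refine mul_le_mul_of_nonneg_left ?_ (abs_nonneg _)
        exact mul_le_mul (abs_le_nu p α) (abs_le_nu2 V β j) (abs_nonneg _) (nu_nonneg p)
  refine (Finset.sum_le_sum fun i _ => step i).trans (le_of_eq ?_)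
  simp only [Finset.sum_mul]
  refine Finset.sum_congr rfl fun i _ => ?_
  rw [Finset.sum_comm]

lemma PFb (p : Fin n → ℝ) (W : Fin n → Fin N → ℝ) :
    nu (fun i => ∑ α, p α * W α i) ≤ nu p * nu2 W := by
  refine nu_le_of_sq_le (mul_nonneg (nu_nonneg p) (nu2_nonneg W)) ?_
  calc ∑ i, (∑ α, p α * W α i) ^ 2 ≤ ∑ i, (∑ α, p α ^ 2) * ∑ α, W α i ^ 2 :=
        Finset.sum_le_sum fun i _ => Finset.sum_mul_sq_le_sq_mul_sq _ _ _
  _ = (∑ α, p α ^ 2) * ∑ i, ∑ α, W α i ^ 2 := by rw [← Finset.mul_sum]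
  _ = (∑ α, p α ^ 2) * ∑ α, ∑ i, W α i ^ 2 := by rw [Finset.sum_comm]
  _ = (nu p * nu2 W) ^ 2 := by rw [mul_pow, sq_nu, sq_nu2]

lemma ell_nu {lam : ℝ} (pv : Fin n → ℝ) (A : Fin N → Fin N → Fin n → Fin n → ℝ)
    (hell : ∀ ξ : Fin n → Fin N → ℝ,
      lam * ∑ α, ∑ i, (ξ α i) ^ 2 ≤ ∑ i, ∑ j, ∑ α, ∑ β, A i j α β * ξ α i * ξ β j)
    (v : Fin N → ℝ) :
    lam * (∑ α, pv α ^ 2) * nu v ≤ nu (fun i => ∑ j, MM pv A i j * v j) := by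
  refine ell_pair ?_
  have h := hell (fun α i => pv α * v i)
  have l1 : ∑ α, ∑ i, (pv α * v i) ^ 2 = (∑ α, pv α ^ 2) * ∑ i, v i ^ 2 := by
    rw [Finset.sum_mul_sum]
    exact Finset.sum_congr rfl fun α _ => Finset.sum_congr rfl fun i _ => by ring
  have l2 : ∑ i, ∑ j, ∑ α, ∑ β, A i j α β * (pv α * v i) * (pv β * v j)
      = ∑ i, ∑ j, MM pv A i j * v i * v j := by
    refine Finset.sum_congr rfl fun i _ => Finset.sum_congr rfl fun j _ => ?_
    unfold MM
    simp only [Finset.sum_mul]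
    exact Finset.sum_congr rfl fun α _ => Finset.sum_congr rfl fun β _ => by ring
  rw [l1, l2] at h
  calc lam * (∑ α, pv α ^ 2) * ∑ i, v i ^ 2
      = lam * ((∑ α, pv α ^ 2) * ∑ i, v i ^ 2) := by ring
  _ ≤ _ := h

lemma const4 (c : ℝ) : ∑ _i : Fin N, ∑ _j : Fin N, ∑ _α : Fin n, ∑ _β : Fin n, c
    = ((N : ℝ) * N * n * n) * c := by
  simp [Finset.sum_const, Finset.card_univ, nsmul_eq_mul]
  ring

lemma sumB_le {B : Fin N → Fin N → Fin n → Fin n → ℝ} {Lam : ℝ}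
    (hB : ∀ i j α β, |B i j α β| ≤ Lam) :
    (∑ i, ∑ j, ∑ α, ∑ β, |B i j α β|) ≤ ((N : ℝ) * N * n * n) * Lam := by
  rw [← const4 Lam]
  exact Finset.sum_le_sum fun i _ => Finset.sum_le_sum fun j _ =>
    Finset.sum_le_sum fun α _ => Finset.sum_le_sum fun β _ => hB i j α β

lemma MB {Lam : ℝ} (px py : Fin n → ℝ) (Ax Ay : Fin N → Fin N → Fin n → Fin n → ℝ)
    (hAx : ∀ i j α β, |Ax i j α β| ≤ Lam) (hLam : 0 ≤ Lam) (v : Fin N → ℝ) :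
    nu (fun i => ∑ j, (MM py Ay i j - MM px Ax i j) * v j)
      ≤ ((∑ i, ∑ j, ∑ α, ∑ β, |Ay i j α β - Ax i j α β|) * (nu py * nu py)
          + ((N : ℝ) * N * n * n) * Lam * (nu px + nu py) * nu (fun α => px α - py α)) * nu v := by
  refine (nu_le_sum_abs _).trans ?_
  have entry : ∀ i j, |MM py Ay i j - MM px Ax i j| ≤
      ∑ α, ∑ β, (|Ay i j α β - Ax i j α β| * (nu py * nu py)
        + Lam * (nu px + nu py) * nu (fun α => px α - py α)) := by
    intro i j
    unfold MM
    rw [← Finset.sum_sub_distrib]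
    refine (Finset.abs_sum_le_sum_abs _ _).trans (Finset.sum_le_sum fun α _ => ?_)
    rw [← Finset.sum_sub_distrib]
    refine (Finset.abs_sum_le_sum_abs _ _).trans (Finset.sum_le_sum fun β _ => ?_)
    have id1 : py α * py β * Ay i j α β - px α * px β * Ax i j α β
        = py α * py β * (Ay i j α β - Ax i j α β)
          + ((py α - px α) * py β * Ax i j α β + px α * (py β - px β) * Ax i j α β) := by ring
    rw [id1]
    have T1 : |py α * py β * (Ay i j α β - Ax i j α β)|
        ≤ |Ay i j α β - Ax i j α β| * (nu py * nu py) := by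
      rw [abs_mul, abs_mul]
      calc |py α| * |py β| * |Ay i j α β - Ax i j α β|
          = |Ay i j α β - Ax i j α β| * (|py α| * |py β|) := by ring
      _ ≤ _ := mul_le_mul_of_nonneg_left
            (mul_le_mul (abs_le_nu _ _) (abs_le_nu _ _) (abs_nonneg _) (nu_nonneg _))
            (abs_nonneg _)
    have h1 : |py α - px α| ≤ nu (fun α => px α - py α) := by
      rw [abs_sub_comm]; exact abs_le_nu (fun α => px α - py α) α
    have h2 : |py β - px β| ≤ nu (fun α => px α - py α) := by
      rw [abs_sub_comm]; exact abs_le_nu (fun α => px α - py α) β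
    have T2 : |(py α - px α) * py β * Ax i j α β|
        ≤ nu (fun α => px α - py α) * nu py * Lam := by
      rw [abs_mul, abs_mul]
      exact mul_le_mul (mul_le_mul h1 (abs_le_nu _ _) (abs_nonneg _) (nu_nonneg _))
        (hAx i j α β) (abs_nonneg _) (mul_nonneg (nu_nonneg _) (nu_nonneg _))
    have T3 : |px α * (py β - px β) * Ax i j α β|
        ≤ nu px * nu (fun α => px α - py α) * Lam := by
      rw [abs_mul, abs_mul]
      exact mul_le_mul (mul_le_mul (abs_le_nu _ _) h2 (abs_nonneg _) (nu_nonneg _))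
        (hAx i j α β) (abs_nonneg _) (mul_nonneg (nu_nonneg _) (nu_nonneg _))
    have habs := abs_add_le (py α * py β * (Ay i j α β - Ax i j α β))
      ((py α - px α) * py β * Ax i j α β + px α * (py β - px β) * Ax i j α β)
    have habs2 := abs_add_le ((py α - px α) * py β * Ax i j α β)
      (px α * (py β - px β) * Ax i j α β)
    nlinarith [habs, habs2, T1, T2, T3]
  have rowbd : ∀ i, |∑ j, (MM py Ay i j - MM px Ax i j) * v j|
      ≤ ∑ j, ∑ α, ∑ β, ((|Ay i j α β - Ax i j α β| * (nu py * nu py)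
          + Lam * (nu px + nu py) * nu (fun α => px α - py α)) * nu v) := by
    intro i
    refine (Finset.abs_sum_le_sum_abs _ _).trans (Finset.sum_le_sum fun j _ => ?_)
    rw [abs_mul]
    calc |MM py Ay i j - MM px Ax i j| * |v j|
        ≤ (∑ α, ∑ β, (|Ay i j α β - Ax i j α β| * (nu py * nu py)
            + Lam * (nu px + nu py) * nu (fun α => px α - py α))) * nu v := by
          refine mul_le_mul (entry i j) (abs_le_nu v j) (abs_nonneg _) ?_
          refine Finset.sum_nonneg fun α _ => Finset.sum_nonneg fun β _ => add_nonneg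
            (mul_nonneg (abs_nonneg _) (mul_nonneg (nu_nonneg _) (nu_nonneg _)))
            (mul_nonneg (mul_nonneg hLam (add_nonneg (nu_nonneg _) (nu_nonneg _)))
              (nu_nonneg _))
    _ = _ := by simp only [Finset.sum_mul]
  refine (Finset.sum_le_sum fun i _ => rowbd i).trans (le_of_eq ?_)
  simp only [add_mul, Finset.sum_add_distrib, ← Finset.sum_mul, const4]
lemma nu_neg_eq (f : Fin N → ℝ) : nu (fun i => -(f i)) = nu f :=
  nu_eq_of_abs_eq fun i => abs_neg (f i)

lemma nu2_sub_comm (f g : Fin n → Fin N → ℝ) :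
    nu2 (fun a i => f a i - g a i) = nu2 (fun a i => g a i - f a i) := by
  unfold nu2
  congr 1
  refine Finset.sum_congr rfl fun a _ => Finset.sum_congr rfl fun i _ => by ring

lemma R_bound {Lam : ℝ} (pv : Fin n → ℝ) (A : Fin N → Fin N → Fin n → Fin n → ℝ)
    (F U : Fin n → Fin N → ℝ) (hA : ∀ i j α β, |A i j α β| ≤ Lam) (hLam : 0 ≤ Lam)
    (hp1 : 1 ≤ nu pv) :
    nu (RR pv A F U) ≤ (1 + (N : ℝ) * N * n * n * Lam) * (nu pv * (nu2 U + nu2 F)) := by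
  have hre : RR pv A F U = fun i =>
      (-(U 0 i) + ∑ α, ∑ j, ∑ β, pv α * A i j α β * GG U β j)
        + -(∑ α, pv α * F α i) := by
    funext i; unfold RR; ring
  rw [hre]
  refine (nu_add_le _ _).trans ?_
  have b1 : nu (fun i => -(U 0 i) + ∑ α, ∑ j, ∑ β, pv α * A i j α β * GG U β j)
      ≤ nu2 U + ((N : ℝ) * N * n * n * Lam) * (nu pv * nu2 U) := by
    refine (nu_add_le _ _).trans (add_le_add ?_ ?_)
    · rw [nu_neg_eq]
      exact nu_row_le U 0
    · refine (Tb pv A (GG U)).trans ?_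
      refine (mul_le_mul (sumB_le hA) (mul_le_mul_of_nonneg_left (nu2_GG_le U) (nu_nonneg pv))
        (mul_nonneg (nu_nonneg _) (nu2_nonneg _)) (by positivity)).trans ?_
      exact le_of_eq (by ring)
  have b2 : nu (fun i => -(∑ α, pv α * F α i)) ≤ nu pv * nu2 F := by
    rw [nu_neg_eq]; exact PFb pv F
  have hU : nu2 U ≤ nu pv * nu2 U := by
    nlinarith [nu2_nonneg U, hp1]
  have hC : (0:ℝ) ≤ (N : ℝ) * N * n * n * Lam := by positivity
  nlinarith [b1, b2, hU, mul_nonneg hC (mul_nonneg (nu_nonneg pv) (nu2_nonneg F))]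
lemma DR_bound {Lam : ℝ} (px py : Fin n → ℝ) (Ax Ay : Fin N → Fin N → Fin n → Fin n → ℝ)
    (Fx Fy Ux Uy : Fin n → Fin N → ℝ)
    (hAx : ∀ i j α β, |Ax i j α β| ≤ Lam) (hAy : ∀ i j α β, |Ay i j α β| ≤ Lam)
    (hLam : 0 ≤ Lam) :
    nu (fun i => RR px Ax Fx Ux i - RR py Ay Fy Uy i)
      ≤ nu2 (fun α i => Uy α i - Ux α i)
        + ((N : ℝ) * N * n * n * Lam) * (nu (fun α => px α - py α) * nu2 Ux)
        + (∑ i, ∑ j, ∑ α, ∑ β, |Ay i j α β - Ax i j α β|) * (nu py * nu2 Ux)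
        + ((N : ℝ) * N * n * n * Lam) * (nu py * nu2 (fun α i => Uy α i - Ux α i))
        + nu (fun α => px α - py α) * nu2 Fx
        + nu py * nu2 (fun α i => Fy α i - Fx α i) := by
  have hdec : (fun i => RR px Ax Fx Ux i - RR py Ay Fy Uy i) = fun i =>
      (-(Ux 0 i - Uy 0 i)
        + (∑ α, ∑ j, ∑ β, (px α - py α) * Ax i j α β * GG Ux β j))
      + ((∑ α, ∑ j, ∑ β, py α * (Ax i j α β - Ay i j α β) * GG Ux β j)
      + ((∑ α, ∑ j, ∑ β, py α * Ay i j α β * (GG Ux β j - GG Uy β j))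
      + (-(∑ α, (px α - py α) * Fx α i) + -(∑ α, py α * (Fx α i - Fy α i))))) := by
    funext i
    unfold RR
    have hT : (∑ α, ∑ j, ∑ β, px α * Ax i j α β * GG Ux β j)
        - (∑ α, ∑ j, ∑ β, py α * Ay i j α β * GG Uy β j)
        = (∑ α, ∑ j, ∑ β, (px α - py α) * Ax i j α β * GG Ux β j)
          + ((∑ α, ∑ j, ∑ β, py α * (Ax i j α β - Ay i j α β) * GG Ux β j)
          + (∑ α, ∑ j, ∑ β, py α * Ay i j α β * (GG Ux β j - GG Uy β j))) := by
      simp only [← Finset.sum_sub_distrib, ← Finset.sum_add_distrib]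
      refine Finset.sum_congr rfl fun α _ => Finset.sum_congr rfl fun j _ =>
        Finset.sum_congr rfl fun β _ => by ring
    have hF : (∑ α, px α * Fx α i) - (∑ α, py α * Fy α i)
        = (∑ α, (px α - py α) * Fx α i) + (∑ α, py α * (Fx α i - Fy α i)) := by
      simp only [← Finset.sum_sub_distrib, ← Finset.sum_add_distrib]
      refine Finset.sum_congr rfl fun α _ => by ring
    linarith [hT, hF]
  rw [hdec]
  have B1 : nu (fun i => -(Ux 0 i - Uy 0 i)) ≤ nu2 (fun α i => Uy α i - Ux α i) := by
    have : nu (fun i => -(Ux 0 i - Uy 0 i)) = nu (fun i => Uy 0 i - Ux 0 i) :=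
      nu_eq_of_abs_eq fun i => by rw [abs_neg, abs_sub_comm]
    rw [this]
    exact nu_row_le (fun α i => Uy α i - Ux α i) 0
  have B2 : nu (fun i => ∑ α, ∑ j, ∑ β, (px α - py α) * Ax i j α β * GG Ux β j)
      ≤ ((N : ℝ) * N * n * n * Lam) * (nu (fun α => px α - py α) * nu2 Ux) := by
    refine (Tb _ _ _).trans ?_
    exact mul_le_mul (sumB_le hAx)
      (mul_le_mul_of_nonneg_left (nu2_GG_le Ux) (nu_nonneg _))
      (mul_nonneg (nu_nonneg _) (nu2_nonneg _)) (by positivity)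
  have B3 : nu (fun i => ∑ α, ∑ j, ∑ β, py α * (Ax i j α β - Ay i j α β) * GG Ux β j)
      ≤ (∑ i, ∑ j, ∑ α, ∑ β, |Ay i j α β - Ax i j α β|) * (nu py * nu2 Ux) := by
    refine (Tb _ _ _).trans ?_
    have he : (∑ i, ∑ j, ∑ α, ∑ β, |Ax i j α β - Ay i j α β|)
        = ∑ i, ∑ j, ∑ α, ∑ β, |Ay i j α β - Ax i j α β| := by
      refine Finset.sum_congr rfl fun i _ => Finset.sum_congr rfl fun j _ =>
        Finset.sum_congr rfl fun α _ => Finset.sum_congr rfl fun β _ => abs_sub_comm _ _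
    rw [he]
    refine mul_le_mul_of_nonneg_left
      (mul_le_mul_of_nonneg_left (nu2_GG_le Ux) (nu_nonneg _)) ?_
    positivity
  have B4 : nu (fun i => ∑ α, ∑ j, ∑ β, py α * Ay i j α β * (GG Ux β j - GG Uy β j))
      ≤ ((N : ℝ) * N * n * n * Lam) * (nu py * nu2 (fun α i => Uy α i - Ux α i)) := by
    refine (Tb py Ay (fun β j => GG Ux β j - GG Uy β j)).trans ?_
    have hm : nu2 (fun β j => GG Ux β j - GG Uy β j) ≤ nu2 (fun α i => Uy α i - Ux α i) := by
      refine nu2_mono fun β j => ?_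
      unfold GG
      by_cases h : β = 0
      · simp [h, abs_nonneg]
      · simp only [if_neg h]
        rw [abs_sub_comm]
    exact mul_le_mul (sumB_le hAy) (mul_le_mul_of_nonneg_left hm (nu_nonneg _))
      (mul_nonneg (nu_nonneg _) (nu2_nonneg _)) (by positivity)
  have B5 : nu (fun i => -(∑ α, (px α - py α) * Fx α i))
      ≤ nu (fun α => px α - py α) * nu2 Fx := by
    rw [nu_neg_eq]; exact PFb _ _
  have B6 : nu (fun i => -(∑ α, py α * (Fx α i - Fy α i)))
      ≤ nu py * nu2 (fun α i => Fy α i - Fx α i) := by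
    rw [nu_neg_eq]
    refine (PFb py (fun α i => Fx α i - Fy α i)).trans ?_
    rw [nu2_sub_comm]
  refine ((nu_add_le _ _).trans (add_le_add ((nu_add_le _ _).trans (add_le_add B1 B2))
    ((nu_add_le _ _).trans (add_le_add B3 ((nu_add_le _ _).trans
      (add_le_add B4 ((nu_add_le _ _).trans (add_le_add B5 B6)))))))).trans (le_of_eq (by ring))
lemma nu2_e0 (v : Fin N → ℝ) : nu2 (fun (α : Fin n) i => if α = 0 then v i else 0) = nu v := by
  unfold nu2 nu
  congr 1
  have h : ∀ α : Fin n, ∑ i, (if α = 0 then v i else 0) ^ 2 = if α = 0 then ∑ i, v i ^ 2 else 0 := by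
    intro α; by_cases h : α = 0 <;> simp [h]
  rw [Finset.sum_congr rfl (fun α _ => h α), Finset.sum_ite_eq' Finset.univ (0 : Fin n)]
  simp

lemma Z_split_gen (px py q : Fin n → ℝ) (ζx ζy Ux Uy : Fin n → Fin N → ℝ) (w : Fin N → ℝ)
    (hid : ∀ (β : Fin n), β ≠ 0 → ∀ i, ζx β i - ζy β i
      = (Ux β i - Uy β i) + (-(q β * (ζx 0 i - ζy 0 i)) + -((px β - py β) * w i))) :
    nu2 (fun α i => ζx α i - ζy α i)
      ≤ nu (fun i => ζx 0 i - ζy 0 i)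
        + (nu2 (fun α i => Uy α i - Ux α i)
          + (nu q * nu (fun i => ζx 0 i - ζy 0 i)
            + nu (fun α => px α - py α) * nu w)) := by
  have h0 : (fun (α : Fin n) (i : Fin N) => ζx α i - ζy α i)
      = fun α i => (if α = 0 then ζx 0 i - ζy 0 i else 0)
        + (if α = 0 then 0 else ζx α i - ζy α i) := by
    funext α i; by_cases h : α = 0 <;> simp [h]
  rw [h0]
  refine (nu2_add_le _ _).trans (add_le_add (le_of_eq (nu2_e0 _)) ?_)
  have h1 : (fun (α : Fin n) (i : Fin N) => if α = 0 then 0 else ζx α i - ζy α i)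
      = fun α i => (if α = 0 then 0 else Ux α i - Uy α i)
        + ((if α = 0 then 0 else -(q α * (ζx 0 i - ζy 0 i)))
          + (if α = 0 then 0 else -((px α - py α) * w i))) := by
    funext α i
    by_cases h : α = 0
    · simp [h]
    · simp only [if_neg h]
      rw [hid α h i]
  rw [h1]
  refine (nu2_add_le _ _).trans (add_le_add ?_ ((nu2_add_le _ _).trans (add_le_add ?_ ?_)))
  · refine nu2_mono fun α i => ?_
    by_cases h : α = 0 <;> simp [h, abs_sub_comm (Ux α i) (Uy α i), abs_nonneg]
  · refine le_trans (nu2_mono (g := fun α i => q α * (ζx 0 i - ζy 0 i)) fun α i => ?_)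
      (le_of_eq (nu2_tensor q _))
    by_cases h : α = 0 <;> simp [h, abs_nonneg] <;> positivity
  · refine le_trans (nu2_mono (g := fun α i => (px α - py α) * w i) fun α i => ?_)
      (le_of_eq (nu2_tensor _ _))
    by_cases h : α = 0 <;> simp [h, abs_nonneg] <;> positivity

set_option maxHeartbeats 1000000 in
lemma crunch {lam C0 K m M u v vδ dπ dA dU dF SU SF Z : ℝ}
    (hlam : 0 < lam) (hC0 : 0 ≤ C0) (hK : 1 ≤ K)
    (hm1 : 1 ≤ m) (hmM : m ≤ M)
    (hu0 : 0 ≤ u) (hv0 : 0 ≤ v) (hvd0 : 0 ≤ vδ) (hdπ0 : 0 ≤ dπ) (hdA0 : 0 ≤ dA)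
    (hdU0 : 0 ≤ dU) (hdF0 : 0 ≤ dF) (hSU : 0 ≤ SU) (hSF : 0 ≤ SF)
    (hdπ : dπ ≤ m + M) (hdA : dA ≤ 2 * C0)
    (hu : lam * m * u ≤ K * (SU + SF + dU + dF))
    (hv : lam * M * v ≤ K * (SU + SF + dU + dF))
    (hδ : lam * M ^ 2 * vδ ≤ (M ^ 2 * dA + C0 * dπ * (m + M)) * u
          + (dU + C0 * dπ * SU + dA * M * SU + C0 * M * dU + dπ * SF + M * dF))
    (hZ : Z ≤ vδ + dU + m * vδ + dπ * v) :
    lam ^ 2 * Z ≤ (lam ^ 2 + 16 * C0 * K + 2 * K + 4 * lam + 2 * lam * C0 + 3 * K * lam)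
      * ((dU + dF) + (SU + SF) * dπ + (SU + SF) * dA) := by
  have hM1 : 1 ≤ M := hm1.trans hmM
  have hMpos : 0 < M := lt_of_lt_of_le one_pos hM1
  have hmpos : 0 < m := lt_of_lt_of_le one_pos hm1
  have hM2 : (0:ℝ) < M ^ 2 := by positivity
  have h2M : m + M ≤ 2 * M := by linarith
  have hMM2 : M ≤ M ^ 2 := by nlinarith
  have hmm2 : m ≤ M ^ 2 := by nlinarith
  have hmMM2 : m * M ≤ M ^ 2 := by nlinarith
  -- Step 1 : lam^2 * (m * vδ) ≤ W
  have hmv : lam ^ 2 * (m * vδ)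
      ≤ K * (SU + SF) * dA + 6 * C0 * K * (dU + dF) + 2 * C0 * K * dπ * (SU + SF)
        + lam * ((1 + C0) * dU + dF + C0 * dπ * SU + dπ * SF + dA * SU) := by
    refine le_of_mul_le_mul_right ?_ hM2
    have p1 : (lam * m) * (lam * M ^ 2 * vδ)
        ≤ (lam * m) * ((M ^ 2 * dA + C0 * dπ * (m + M)) * u
          + (dU + C0 * dπ * SU + dA * M * SU + C0 * M * dU + dπ * SF + M * dF)) :=
      mul_le_mul_of_nonneg_left hδ (by positivity)
    have hcoef : (0:ℝ) ≤ M ^ 2 * dA + C0 * dπ * (m + M) := by positivity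
    have p2 : (M ^ 2 * dA + C0 * dπ * (m + M)) * (lam * m * u)
        ≤ (M ^ 2 * dA + C0 * dπ * (m + M)) * (K * (SU + SF + dU + dF)) :=
      mul_le_mul_of_nonneg_left hu hcoef
    have hK0 : (0:ℝ) ≤ K := zero_le_one.trans hK
    have h2M2 : m + M ≤ 2 * M ^ 2 := by nlinarith
    have hq : dπ * (m + M) ≤ 4 * M ^ 2 := by nlinarith [mul_le_mul_of_nonneg_right hdπ (by linarith : (0:ℝ) ≤ m + M)]
    have g2 : (K * M ^ 2) * (dA * (dU + dF)) ≤ (K * M ^ 2) * (2 * C0 * (dU + dF)) :=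
      mul_le_mul_of_nonneg_left
        (mul_le_mul_of_nonneg_right hdA (add_nonneg hdU0 hdF0)) (by positivity)
    have g3 : (C0 * K * dπ * (SU + SF)) * (m + M) ≤ (C0 * K * dπ * (SU + SF)) * (2 * M ^ 2) :=
      mul_le_mul_of_nonneg_left h2M2 (by positivity)
    have g4 : (C0 * K * (dU + dF)) * (dπ * (m + M)) ≤ (C0 * K * (dU + dF)) * (4 * M ^ 2) :=
      mul_le_mul_of_nonneg_left hq (by positivity)
    have g5 : (lam * dU) * m ≤ (lam * dU) * M ^ 2 :=
      mul_le_mul_of_nonneg_left hmm2 (by positivity)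
    have g6 : (lam * (C0 * dπ * SU)) * m ≤ (lam * (C0 * dπ * SU)) * M ^ 2 :=
      mul_le_mul_of_nonneg_left hmm2 (by positivity)
    have g7 : (lam * (dA * SU)) * (m * M) ≤ (lam * (dA * SU)) * M ^ 2 :=
      mul_le_mul_of_nonneg_left hmMM2 (by positivity)
    have g8 : (lam * (C0 * dU)) * (m * M) ≤ (lam * (C0 * dU)) * M ^ 2 :=
      mul_le_mul_of_nonneg_left hmMM2 (by positivity)
    have g9 : (lam * (dπ * SF)) * m ≤ (lam * (dπ * SF)) * M ^ 2 :=
      mul_le_mul_of_nonneg_left hmm2 (by positivity)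
    have g10 : (lam * dF) * (m * M) ≤ (lam * dF) * M ^ 2 :=
      mul_le_mul_of_nonneg_left hmMM2 (by positivity)
    linarith [p1, p2, g2, g3, g4, g5, g6, g7, g8, g9, g10]
  -- Step 2 : lam * (dπ * v)
  have hdv : lam * (dπ * v) ≤ K * dπ * (SU + SF) + 2 * K * (dU + dF) := by
    refine le_of_mul_le_mul_right ?_ hMpos
    have hK0 : (0:ℝ) ≤ K := zero_le_one.trans hK
    have q1 : dπ * (lam * M * v) ≤ dπ * (K * (SU + SF + dU + dF)) :=
      mul_le_mul_of_nonneg_left hv hdπ0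
    have q2 : (K * (dU + dF)) * dπ ≤ (K * (dU + dF)) * (2 * M) :=
      mul_le_mul_of_nonneg_left (hdπ.trans h2M) (by positivity)
    have q3 : (K * dπ * (SU + SF)) * 1 ≤ (K * dπ * (SU + SF)) * M :=
      mul_le_mul_of_nonneg_left hM1 (by positivity)
    linarith [q1, q2, q3]
  -- Step 3 : combine
  have hK0 : (0:ℝ) ≤ K := zero_le_one.trans hK
  have h3 : lam ^ 2 * vδ ≤ lam ^ 2 * (m * vδ) := by nlinarith [mul_nonneg (sq_nonneg lam) hvd0]
  have h4 : lam ^ 2 * Z ≤ lam ^ 2 * dU + 2 * (lam ^ 2 * (m * vδ)) + lam * (lam * (dπ * v)) := by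
    have := mul_le_mul_of_nonneg_left hZ (by positivity : (0:ℝ) ≤ lam ^ 2)
    linarith [h3, this]
  have h5 : lam * (lam * (dπ * v)) ≤ lam * (K * dπ * (SU + SF) + 2 * K * (dU + dF)) :=
    mul_le_mul_of_nonneg_left hdv hlam.le
  -- final comparison
  linarith [h4, h5, hmv,
    mul_nonneg (mul_nonneg hC0 hK0) hdU0, mul_nonneg (mul_nonneg hC0 hK0) hdF0,
    mul_nonneg hlam.le hdU0, mul_nonneg hlam.le hdF0,
    mul_nonneg (mul_nonneg hlam.le hC0) hdF0,
    mul_nonneg (mul_nonneg hlam.le hC0) hdU0,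
    mul_nonneg (mul_nonneg hK0 hlam.le) hdU0, mul_nonneg (mul_nonneg hK0 hlam.le) hdF0,
    mul_nonneg (sq_nonneg lam) hdF0,
    mul_nonneg (mul_nonneg (mul_nonneg hC0 hK0) hdπ0) hSU,
    mul_nonneg (mul_nonneg (mul_nonneg hC0 hK0) hdπ0) hSF,
    mul_nonneg (mul_nonneg hlam.le hdπ0) hSU, mul_nonneg (mul_nonneg hlam.le hdπ0) hSF,
    mul_nonneg (mul_nonneg (mul_nonneg hlam.le hC0) hdπ0) hSU,
    mul_nonneg (mul_nonneg (mul_nonneg hlam.le hC0) hdπ0) hSF,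
    mul_nonneg (mul_nonneg (mul_nonneg hK0 hlam.le) hdπ0) hSU,
    mul_nonneg (mul_nonneg (mul_nonneg hK0 hlam.le) hdπ0) hSF,
    mul_nonneg (mul_nonneg hK0 hdA0) hSU, mul_nonneg (mul_nonneg hK0 hdA0) hSF,
    mul_nonneg (mul_nonneg hlam.le hdA0) hSU, mul_nonneg (mul_nonneg hlam.le hdA0) hSF,
    mul_nonneg (mul_nonneg (sq_nonneg lam) hdπ0) hSU,
    mul_nonneg (mul_nonneg (sq_nonneg lam) hdπ0) hSF,
    mul_nonneg (mul_nonneg (sq_nonneg lam) hdA0) hSU,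
    mul_nonneg (mul_nonneg (sq_nonneg lam) hdA0) hSF,
    mul_nonneg hK0 hdU0, mul_nonneg hK0 hdF0,
    mul_nonneg (mul_nonneg hK0 hdπ0) hSU, mul_nonneg (mul_nonneg hK0 hdπ0) hSF,
    mul_nonneg (mul_nonneg (mul_nonneg hC0 hK0) hdA0) hSU,
    mul_nonneg (mul_nonneg (mul_nonneg hC0 hK0) hdA0) hSF,
    mul_nonneg (mul_nonneg (mul_nonneg hlam.le hC0) hdA0) hSU,
    mul_nonneg (mul_nonneg (mul_nonneg hlam.le hC0) hdA0) hSF,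
    mul_nonneg (mul_nonneg (mul_nonneg hK0 hlam.le) hdA0) hSU,
    mul_nonneg (mul_nonneg (mul_nonneg hK0 hlam.le) hdA0) hSF]
end Point
end S3

open S3 in
set_option maxHeartbeats 2000000 in
/-- Oscillation of `ζ` at two points is controlled by the oscillations of the conormal
quantities `U`, the data `F`, the direction `π` (first component `-1`), and the
coefficients `A`; `c = c(n, N, λ, Λ)`. -/
theorem stmt_3 (n N : ℕ) [NeZero n] [NeZero N] (lam Lam : ℝ)
    (hlam : 0 < lam) (hLam : lam ≤ Lam) :
    ∃ c > 0, ∀ (x y : EuclideanSpace ℝ (Fin n)) (πx πy : Fin n → ℝ)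
      (Ax Ay : Fin N → Fin N → Fin n → Fin n → ℝ)
      (Fx Fy ζx ζy Ux Uy : Fin n → Fin N → ℝ),
      x ≠ y →
      πx 0 = -1 → πy 0 = -1 →
      (∀ ξ : Fin n → Fin N → ℝ,
        lam * ∑ α, ∑ i, (ξ α i) ^ 2 ≤ ∑ i, ∑ j, ∑ α, ∑ β, Ax i j α β * ξ α i * ξ β j) →
      (∀ ξ : Fin n → Fin N → ℝ,
        lam * ∑ α, ∑ i, (ξ α i) ^ 2 ≤ ∑ i, ∑ j, ∑ α, ∑ β, Ay i j α β * ξ α i * ξ β j) →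
      (∀ i j α β, |Ax i j α β| ≤ Lam) →
      (∀ i j α β, |Ay i j α β| ≤ Lam) →
      (∀ i, Ux 0 i = ∑ α, πx α * ((∑ j, ∑ β, Ax i j α β * ζx β j) - Fx α i)) →
      (∀ i, Uy 0 i = ∑ α, πy α * ((∑ j, ∑ β, Ay i j α β * ζy β j) - Fy α i)) →
      (∀ i, ∀ β : Fin n, β ≠ 0 → Ux β i = ζx β i + πx β * ζx 0 i) →
      (∀ i, ∀ β : Fin n, β ≠ 0 → Uy β i = ζy β i + πy β * ζy 0 i) →
      Real.sqrt (∑ α, ∑ i, (ζx α i - ζy α i) ^ 2) ≤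
        c * (Real.sqrt (∑ α, ∑ i, (Uy α i - Ux α i) ^ 2) +
              Real.sqrt (∑ α, ∑ i, (Fy α i - Fx α i) ^ 2))
        + c * (Real.sqrt (∑ α, ∑ i, (Ux α i) ^ 2) + Real.sqrt (∑ α, ∑ i, (Fx α i) ^ 2)) *
            (Real.sqrt (∑ α, (πx α - πy α) ^ 2) + Real.sqrt (∑ α, (πx α - πy α) ^ 2) ^ 2)
        + c * (Real.sqrt (∑ α, ∑ i, (Ux α i) ^ 2) + Real.sqrt (∑ α, ∑ i, (Fx α i) ^ 2)) *
            (∑ i, ∑ j, ∑ α, ∑ β, |Ay i j α β - Ax i j α β|) := by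
  have hLam0 : (0:ℝ) < Lam := hlam.trans_le hLam
  have hn1 : (1:ℝ) ≤ (n:ℝ) := by
    exact_mod_cast Nat.one_le_iff_ne_zero.mpr (NeZero.ne n)
  have hN1 : (1:ℝ) ≤ (N:ℝ) := by
    exact_mod_cast Nat.one_le_iff_ne_zero.mpr (NeZero.ne N)
  set C0 : ℝ := (N : ℝ) * N * n * n * Lam with hC0def
  have hC0 : 0 ≤ C0 := by
    rw [hC0def]; positivity
  set KK : ℝ := 1 + C0 with hKKdef
  have hKK : 1 ≤ KK := by rw [hKKdef]; linarith
  have hKK0 : 0 ≤ KK := by linarith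
  have hcpos : 0 < (lam ^ 2 + 16 * C0 * KK + 2 * KK + 4 * lam + 2 * lam * C0 + 3 * KK * lam)
      / lam ^ 2 := by
    apply div_pos ?_ (by positivity)
    nlinarith [mul_nonneg (mul_nonneg hC0 hKK0) (le_of_lt hlam), mul_nonneg hC0 hKK0,
      mul_nonneg hKK0 hlam.le, mul_nonneg hlam.le hC0]
  refine ⟨(lam ^ 2 + 16 * C0 * KK + 2 * KK + 4 * lam + 2 * lam * C0 + 3 * KK * lam) / lam ^ 2,
    hcpos, ?_⟩
  intro x y πx πy Ax Ay Fx Fy ζx ζy Ux Uy hxy hπx0 hπy0 hellx helly hAxb hAyb hU0x hU0y hUβx hUβy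
  show nu2 (fun α i => ζx α i - ζy α i) ≤ _ * (nu2 (fun α i => Uy α i - Ux α i)
      + nu2 (fun α i => Fy α i - Fx α i))
    + _ * (nu2 Ux + nu2 Fx) * (nu (fun α => πx α - πy α) + nu (fun α => πx α - πy α) ^ 2)
    + _ * (nu2 Ux + nu2 Fx) * (∑ i, ∑ j, ∑ α, ∑ β, |Ay i j α β - Ax i j α β|)
  -- scalar abbreviations
  set P : ℝ := nu πx with hPdef
  set Q : ℝ := nu πy with hQdef
  set dπ : ℝ := nu (fun α => πx α - πy α) with hdπdef
  set dA : ℝ := ∑ i, ∑ j, ∑ α, ∑ β, |Ay i j α β - Ax i j α β| with hdAdef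
  set dU : ℝ := nu2 (fun α i => Uy α i - Ux α i) with hdUdef
  set dF : ℝ := nu2 (fun α i => Fy α i - Fx α i) with hdFdef
  set SU : ℝ := nu2 Ux with hSUdef
  set SF : ℝ := nu2 Fx with hSFdef
  set z0x : ℝ := nu (fun j => ζx 0 j) with hz0xdef
  set z0y : ℝ := nu (fun j => ζy 0 j) with hz0ydef
  set vδ : ℝ := nu (fun j => ζx 0 j - ζy 0 j) with hvddef
  set Z : ℝ := nu2 (fun α i => ζx α i - ζy α i) with hZdef
  -- basic facts
  have hP1 : 1 ≤ P := by
    have h := abs_le_nu πx 0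
    rw [hπx0] at h; simpa using h
  have hQ1 : 1 ≤ Q := by
    have h := abs_le_nu πy 0
    rw [hπy0] at h; simpa using h
  have hP0 : 0 < P := lt_of_lt_of_le one_pos hP1
  have hQ0 : 0 < Q := lt_of_lt_of_le one_pos hQ1
  have hdπ0 : 0 ≤ dπ := nu_nonneg _
  have hdA0 : 0 ≤ dA := by
    rw [hdAdef]
    refine Finset.sum_nonneg fun i _ => Finset.sum_nonneg fun j _ =>
      Finset.sum_nonneg fun α _ => Finset.sum_nonneg fun β _ => abs_nonneg _
  have hdU0 : 0 ≤ dU := nu2_nonneg _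
  have hdF0 : 0 ≤ dF := nu2_nonneg _
  have hSU0 : 0 ≤ SU := nu2_nonneg _
  have hSF0 : 0 ≤ SF := nu2_nonneg _
  have hz0x0 : 0 ≤ z0x := nu_nonneg _
  have hz0y0 : 0 ≤ z0y := nu_nonneg _
  have hvd0 : 0 ≤ vδ := nu_nonneg _
  have hdπPQ : dπ ≤ P + Q := by
    have h1 : (fun α => πx α - πy α) = fun α => πx α + -(πy α) := by funext α; ring
    rw [hdπdef, h1]
    refine (nu_add_le _ _).trans ?_
    rw [nu_eq_of_abs_eq (fun α => abs_neg (πy α))]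
  have hdA2C0 : dA ≤ 2 * C0 := by
    have hb : ∀ i j α β, |Ay i j α β - Ax i j α β| ≤ 2 * Lam := by
      intro i j α β
      have := abs_sub (Ay i j α β) (Ax i j α β)
      have h1 := hAxb i j α β; have h2 := hAyb i j α β
      calc |Ay i j α β - Ax i j α β| ≤ |Ay i j α β| + |Ax i j α β| := abs_sub _ _
      _ ≤ 2 * Lam := by linarith
    calc dA ≤ ((N : ℝ) * N * n * n) * (2 * Lam) := sumB_le hb
    _ = 2 * C0 := by rw [hC0def]; ring
  -- U, F at y
  have hSUy : nu2 Uy ≤ SU + dU := by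
    have h1 : Uy = fun α i => Ux α i + (Uy α i - Ux α i) := by funext α i; ring
    calc nu2 Uy = nu2 (fun α i => Ux α i + (Uy α i - Ux α i)) := by rw [← h1]
    _ ≤ SU + dU := nu2_add_le _ _
  have hSFy : nu2 Fy ≤ SF + dF := by
    have h1 : Fy = fun α i => Fx α i + (Fy α i - Fx α i) := by funext α i; ring
    calc nu2 Fy = nu2 (fun α i => Fx α i + (Fy α i - Fx α i)) := by rw [← h1]
    _ ≤ SF + dF := nu2_add_le _ _
  -- ζ0 bounds
  have eqx := eq_M πx Ax Fx Ux ζx hπx0 hU0x hUβx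
  have eqy := eq_M πy Ay Fy Uy ζy hπy0 hU0y hUβy
  have hz0xb : lam * P * z0x ≤ KK * (SU + SF) := by
    have h1 : lam * (∑ α, πx α ^ 2) * z0x ≤ nu (RR πx Ax Fx Ux) := by
      have h2 := ell_nu πx Ax hellx (fun j => ζx 0 j)
      have h3 : (fun i => ∑ j, MM πx Ax i j * ζx 0 j) = RR πx Ax Fx Ux := funext eqx
      rwa [h3] at h2
    have h4 := R_bound πx Ax Fx Ux hAxb hLam0.le hP1
    have h5 : (∑ α, πx α ^ 2) = P ^ 2 := (sq_nu πx).symm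
    rw [h5] at h1
    have h6 : lam * P ^ 2 * z0x ≤ KK * (P * (SU + SF)) := by
      rw [hKKdef, hC0def]; exact h1.trans h4
    have h7 : (lam * P * z0x) * P ≤ (KK * (SU + SF)) * P := by linarith [h6]
    exact le_of_mul_le_mul_right h7 hP0
  have hz0yb : lam * Q * z0y ≤ KK * (SU + SF + dU + dF) := by
    have h1 : lam * (∑ α, πy α ^ 2) * z0y ≤ nu (RR πy Ay Fy Uy) := by
      have h2 := ell_nu πy Ay helly (fun j => ζy 0 j)
      have h3 : (fun i => ∑ j, MM πy Ay i j * ζy 0 j) = RR πy Ay Fy Uy := funext eqy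
      rwa [h3] at h2
    have h4 := R_bound πy Ay Fy Uy hAyb hLam0.le hQ1
    have h5 : (∑ α, πy α ^ 2) = Q ^ 2 := (sq_nu πy).symm
    rw [h5] at h1
    have h6 : lam * Q ^ 2 * z0y ≤ KK * (Q * (nu2 Uy + nu2 Fy)) := by
      rw [hKKdef, hC0def]; exact h1.trans h4
    have h8 : KK * (Q * (nu2 Uy + nu2 Fy)) ≤ KK * (Q * (SU + SF + dU + dF)) := by
      refine mul_le_mul_of_nonneg_left (mul_le_mul_of_nonneg_left ?_ hQ0.le) hKK0
      linarith [hSUy, hSFy]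
    have h7 : (lam * Q * z0y) * Q ≤ (KK * (SU + SF + dU + dF)) * Q := by
      linarith [h6.trans h8]
    exact le_of_mul_le_mul_right h7 hQ0
  -- ΔR bound
  have hDR := DR_bound πx πy Ax Ay Fx Fy Ux Uy hAxb hAyb hLam0.le
  -- δ bound, version A (ellipticity at y, ζx0 inside)
  have hidA : ∀ i, (∑ j, MM πy Ay i j * (ζx 0 j - ζy 0 j))
      = (∑ j, (MM πy Ay i j - MM πx Ax i j) * ζx 0 j)
        + (RR πx Ax Fx Ux i - RR πy Ay Fy Uy i) := by
    intro i
    have e1 : ∑ j, MM πy Ay i j * (ζx 0 j - ζy 0 j)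
        = ∑ j, MM πy Ay i j * ζx 0 j - ∑ j, MM πy Ay i j * ζy 0 j := by
      rw [← Finset.sum_sub_distrib]
      exact Finset.sum_congr rfl fun j _ => by ring
    have e2 : ∑ j, (MM πy Ay i j - MM πx Ax i j) * ζx 0 j
        = ∑ j, MM πy Ay i j * ζx 0 j - ∑ j, MM πx Ax i j * ζx 0 j := by
      rw [← Finset.sum_sub_distrib]
      exact Finset.sum_congr rfl fun j _ => by ring
    rw [e1, e2, eqx i, eqy i]
    ring
  have hidB : ∀ i, (∑ j, MM πx Ax i j * (ζx 0 j - ζy 0 j))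
      = (∑ j, (MM πy Ay i j - MM πx Ax i j) * ζy 0 j)
        + (RR πx Ax Fx Ux i - RR πy Ay Fy Uy i) := by
    intro i
    have e1 : ∑ j, MM πx Ax i j * (ζx 0 j - ζy 0 j)
        = ∑ j, MM πx Ax i j * ζx 0 j - ∑ j, MM πx Ax i j * ζy 0 j := by
      rw [← Finset.sum_sub_distrib]
      exact Finset.sum_congr rfl fun j _ => by ring
    have e2 : ∑ j, (MM πy Ay i j - MM πx Ax i j) * ζy 0 j
        = ∑ j, MM πy Ay i j * ζy 0 j - ∑ j, MM πx Ax i j * ζy 0 j := by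
      rw [← Finset.sum_sub_distrib]
      exact Finset.sum_congr rfl fun j _ => by ring
    rw [e1, e2, eqx i, eqy i]
    ring
  have RBval : ℝ := 0
  have hdelA : lam * Q ^ 2 * vδ
      ≤ (dA * (Q * Q) + ((N : ℝ) * N * n * n) * Lam * (P + Q) * dπ) * z0x
        + (dU + ((N : ℝ) * N * n * n * Lam) * (dπ * SU) + dA * (Q * SU)
            + ((N : ℝ) * N * n * n * Lam) * (Q * dU) + dπ * SF + Q * dF) := by
    have h1 : lam * (∑ α, πy α ^ 2) * vδ
        ≤ nu (fun i => ∑ j, MM πy Ay i j * (ζx 0 j - ζy 0 j)) :=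
      ell_nu πy Ay helly _
    have h2 : (fun i => ∑ j, MM πy Ay i j * (ζx 0 j - ζy 0 j))
        = fun i => (∑ j, (MM πy Ay i j - MM πx Ax i j) * ζx 0 j)
          + (RR πx Ax Fx Ux i - RR πy Ay Fy Uy i) := funext hidA
    rw [h2] at h1
    have h3 := (nu_add_le (fun i => ∑ j, (MM πy Ay i j - MM πx Ax i j) * ζx 0 j)
      (fun i => RR πx Ax Fx Ux i - RR πy Ay Fy Uy i))
    have h4 := MB πx πy Ax Ay hAxb hLam0.le (fun j => ζx 0 j)
    have h5 : (∑ α, πy α ^ 2) = Q ^ 2 := (sq_nu πy).symm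
    rw [h5] at h1
    calc lam * Q ^ 2 * vδ ≤ _ := h1.trans (h3.trans (add_le_add h4 hDR))
    _ ≤ _ := le_of_eq (by rw [hdπdef, hdAdef, hSUdef, hSFdef, hdUdef, hdFdef])
  have hdelB : lam * P ^ 2 * vδ
      ≤ (dA * (Q * Q) + ((N : ℝ) * N * n * n) * Lam * (P + Q) * dπ) * z0y
        + (dU + ((N : ℝ) * N * n * n * Lam) * (dπ * SU) + dA * (Q * SU)
            + ((N : ℝ) * N * n * n * Lam) * (Q * dU) + dπ * SF + Q * dF) := by
    have h1 : lam * (∑ α, πx α ^ 2) * vδ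
        ≤ nu (fun i => ∑ j, MM πx Ax i j * (ζx 0 j - ζy 0 j)) :=
      ell_nu πx Ax hellx _
    have h2 : (fun i => ∑ j, MM πx Ax i j * (ζx 0 j - ζy 0 j))
        = fun i => (∑ j, (MM πy Ay i j - MM πx Ax i j) * ζy 0 j)
          + (RR πx Ax Fx Ux i - RR πy Ay Fy Uy i) := funext hidB
    rw [h2] at h1
    have h3 := (nu_add_le (fun i => ∑ j, (MM πy Ay i j - MM πx Ax i j) * ζy 0 j)
      (fun i => RR πx Ax Fx Ux i - RR πy Ay Fy Uy i))
    have h4 := MB πx πy Ax Ay hAxb hLam0.le (fun j => ζy 0 j)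
    have h5 : (∑ α, πx α ^ 2) = P ^ 2 := (sq_nu πx).symm
    rw [h5] at h1
    calc lam * P ^ 2 * vδ ≤ _ := h1.trans (h3.trans (add_le_add h4 hDR))
    _ ≤ _ := le_of_eq (by rw [hdπdef, hdAdef, hSUdef, hSFdef, hdUdef, hdFdef])
  -- Z splits
  have hZA : Z ≤ vδ + dU + P * vδ + dπ * z0y := by
    have hid : ∀ (β : Fin n), β ≠ 0 → ∀ i, ζx β i - ζy β i
        = (Ux β i - Uy β i) + (-(πx β * (ζx 0 i - ζy 0 i)) + -((πx β - πy β) * ζy 0 i)) := by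
      intro β hβ i
      have h1 := hUβx i β hβ
      have h2 := hUβy i β hβ
      linear_combination h2 - h1
    have h := Z_split_gen πx πy πx ζx ζy Ux Uy (fun i => ζy 0 i) hid
    rw [← hZdef, ← hvddef, ← hdUdef, ← hPdef, ← hdπdef, ← hz0ydef] at h
    linarith
  have hZB : Z ≤ vδ + dU + Q * vδ + dπ * z0x := by
    have hid : ∀ (β : Fin n), β ≠ 0 → ∀ i, ζx β i - ζy β i
        = (Ux β i - Uy β i) + (-(πy β * (ζx 0 i - ζy 0 i)) + -((πx β - πy β) * ζx 0 i)) := by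
      intro β hβ i
      have h1 := hUβx i β hβ
      have h2 := hUβy i β hβ
      linear_combination h2 - h1
    have h := Z_split_gen πx πy πy ζx ζy Ux Uy (fun i => ζx 0 i) hid
    rw [← hZdef, ← hvddef, ← hdUdef, ← hQdef, ← hdπdef, ← hz0xdef] at h
    linarith
  -- case analysis and conclusion
  have hfinal : lam ^ 2 * Z
      ≤ (lam ^ 2 + 16 * C0 * KK + 2 * KK + 4 * lam + 2 * lam * C0 + 3 * KK * lam)
        * ((dU + dF) + (SU + SF) * dπ + (SU + SF) * dA) := by
    rcases le_total P Q with hc | hc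
    · -- |πx| ≤ |πy|
      have hu : lam * P * z0x ≤ KK * (SU + SF + dU + dF) := by
        have h := mul_nonneg hKK0 (add_nonneg hdU0 hdF0)
        linarith only [hz0xb, h]
      have hδ : lam * Q ^ 2 * vδ ≤ (Q ^ 2 * dA + C0 * dπ * (P + Q)) * z0x
          + (dU + C0 * dπ * SU + dA * Q * SU + C0 * Q * dU + dπ * SF + Q * dF) := by
        rw [hC0def]
        exact hdelA.trans (le_of_eq (by ring))
      exact crunch hlam hC0 hKK hP1 hc hz0x0 hz0y0 hvd0 hdπ0 hdA0 hdU0 hdF0 hSU0 hSF0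
        hdπPQ hdA2C0 hu hz0yb hδ hZA
    · -- |πy| ≤ |πx|
      have hv : lam * P * z0x ≤ KK * (SU + SF + dU + dF) := by
        have h := mul_nonneg hKK0 (add_nonneg hdU0 hdF0)
        linarith only [hz0xb, h]
      have hδ : lam * P ^ 2 * vδ ≤ (P ^ 2 * dA + C0 * dπ * (Q + P)) * z0y
          + (dU + C0 * dπ * SU + dA * P * SU + C0 * P * dU + dπ * SF + P * dF) := by
        rw [hC0def]
        refine hdelB.trans ?_
        have hQP2 : Q * Q ≤ P * P := mul_le_mul hc hc hQ0.le (hQ0.le.trans hc)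
        have w1 : dA * (Q * Q) * z0y ≤ dA * (P * P) * z0y :=
          mul_le_mul_of_nonneg_right (mul_le_mul_of_nonneg_left hQP2 hdA0) hz0y0
        have w2 : dA * (Q * SU) ≤ dA * (P * SU) :=
          mul_le_mul_of_nonneg_left (mul_le_mul_of_nonneg_right hc hSU0) hdA0
        have w3 : ((N : ℝ) * N * n * n * Lam) * (Q * dU)
            ≤ ((N : ℝ) * N * n * n * Lam) * (P * dU) := by
          refine mul_le_mul_of_nonneg_left (mul_le_mul_of_nonneg_right hc hdU0) ?_
          positivity
        have w4 : Q * dF ≤ P * dF := mul_le_mul_of_nonneg_right hc hdF0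
        calc (dA * (Q * Q) + ((N : ℝ) * N * n * n) * Lam * (P + Q) * dπ) * z0y
            + (dU + ((N : ℝ) * N * n * n * Lam) * (dπ * SU) + dA * (Q * SU)
              + ((N : ℝ) * N * n * n * Lam) * (Q * dU) + dπ * SF + Q * dF)
            = dA * (Q * Q) * z0y + (((N : ℝ) * N * n * n) * Lam * (P + Q) * dπ) * z0y
              + dU + ((N : ℝ) * N * n * n * Lam) * (dπ * SU) + dA * (Q * SU)
              + ((N : ℝ) * N * n * n * Lam) * (Q * dU) + dπ * SF + Q * dF := by ring
        _ ≤ dA * (P * P) * z0y + (((N : ℝ) * N * n * n) * Lam * (P + Q) * dπ) * z0y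
              + dU + ((N : ℝ) * N * n * n * Lam) * (dπ * SU) + dA * (P * SU)
              + ((N : ℝ) * N * n * n * Lam) * (P * dU) + dπ * SF + P * dF := by
            linarith only [w1, w2, w3, w4]
        _ = (P ^ 2 * dA + (N : ℝ) * N * n * n * Lam * dπ * (Q + P)) * z0y
              + (dU + (N : ℝ) * N * n * n * Lam * dπ * SU + dA * P * SU
                + (N : ℝ) * N * n * n * Lam * P * dU + dπ * SF + P * dF) := by ring
      have hdπQP : dπ ≤ Q + P := by linarith
      exact crunch hlam hC0 hKK hQ1 hc hz0y0 hz0x0 hvd0 hdπ0 hdA0 hdU0 hdF0 hSU0 hSF0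
        hdπQP hdA2C0 hz0yb hv hδ hZB
  have h1 : Z ≤ ((lam ^ 2 + 16 * C0 * KK + 2 * KK + 4 * lam + 2 * lam * C0 + 3 * KK * lam)
      / lam ^ 2) * ((dU + dF) + (SU + SF) * dπ + (SU + SF) * dA) := by
    rw [div_mul_eq_mul_div, le_div_iff₀ (by positivity : (0:ℝ) < lam ^ 2)]
    linarith only [hfinal]
  have h2 : 0 ≤ ((lam ^ 2 + 16 * C0 * KK + 2 * KK + 4 * lam + 2 * lam * C0 + 3 * KK * lam)
      / lam ^ 2) * ((SU + SF) * dπ ^ 2) :=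
    mul_nonneg hcpos.le (mul_nonneg (add_nonneg hSU0 hSF0) (sq_nonneg dπ))
  linarith only [h1, h2]
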